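/- Let h > 0 be a real number, N ≥ 1 a natural number, and t ≥ 3 a real number. Let u : ℕ → ℝ satisfy u_k ≥ 0 and u_k ≤ u_{k+1} for all k. If for every k with 1 ≤ k ≤ N one has u_{k−1}^{t−2}·(u_k − u_{k−1})/h ≥ (t−2)·u_k^{t−2}·(k·h)^{t−3}, then h·Σ_{k=1}^{N} u_k^t − (h·Σ_{k=1}^{N} u_k)^{t−1} ≥ u_0^{t−1} · h·Σ_{k=1}^{N} u_k. -/

import Mathlib

open Real Finset

private lemma rpow_split {x p : ℝ} (hx : 0 ≤ x) (hp : 0 < p) :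
    x ^ p = x ^ (p - 1) * x := by
  rcases hx.eq_or_lt with h0 | h0
  · rw [← h0, Real.zero_rpow hp.ne', mul_zero]
  · rw [← Real.rpow_add_one h0.ne' (p - 1)]
    norm_num

private lemma conv_upper {a b p : ℝ} (ha : 0 ≤ a) (hab : a ≤ b) (hp : 1 ≤ p) :
    b ^ p - a ^ p ≤ p * b ^ (p - 1) * (b - a) := by
  have hb : 0 ≤ b := ha.trans hab
  rcases hb.eq_or_lt with h0 | h0
  · have ha0 : a = 0 := le_antisymm (hab.trans h0.ge) ha
    rw [ha0, ← h0]
    simp [Real.zero_rpow (by linarith : p ≠ 0)]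
  · have hs : -1 ≤ a / b - 1 := by
      have := div_nonneg ha hb; linarith
    have hber := one_add_mul_self_le_rpow_one_add hs hp
    have h1 : (1 : ℝ) + (a / b - 1) = a / b := by ring
    rw [h1, Real.div_rpow ha hb] at hber
    have hbp : 0 < b ^ p := Real.rpow_pos_of_pos h0 p
    have key : (1 + p * (a / b - 1)) * b ^ p ≤ a ^ p := by
      have := mul_le_mul_of_nonneg_right hber hbp.le
      rwa [div_mul_cancel₀ _ hbp.ne'] at this
    have hbp1 : b ^ p = b ^ (p - 1) * b := rpow_split hb (by linarith)
    have h2 : (1 + p * (a / b - 1)) * b ^ p = b ^ p + p * b ^ (p - 1) * (a - b) := by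
      rw [hbp1]; field_simp
    rw [h2] at key
    linarith

private lemma conv_lower {a b p : ℝ} (ha : 0 ≤ a) (hab : a ≤ b) (hp : 1 ≤ p) :
    a ^ p + p * a ^ (p - 1) * (b - a) ≤ b ^ p := by
  have hb : 0 ≤ b := ha.trans hab
  rcases ha.eq_or_lt with h0 | h0
  · rw [← h0]
    rcases hp.eq_or_lt with hp1 | hp1
    · rw [← hp1]
      simp [Real.rpow_one]
    · rw [Real.zero_rpow (by linarith : p ≠ 0),
        Real.zero_rpow (by linarith : p - 1 ≠ 0)]
      simpa using Real.rpow_nonneg hb p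
  · have hs : -1 ≤ b / a - 1 := by
      have := div_nonneg hb ha; linarith
    have hber := one_add_mul_self_le_rpow_one_add hs hp
    have h1 : (1 : ℝ) + (b / a - 1) = b / a := by ring
    rw [h1, Real.div_rpow hb ha] at hber
    have hap : 0 < a ^ p := Real.rpow_pos_of_pos h0 p
    have key : (1 + p * (b / a - 1)) * a ^ p ≤ b ^ p := by
      have := mul_le_mul_of_nonneg_right hber hap.le
      rwa [div_mul_cancel₀ _ hap.ne'] at this
    have hap1 : a ^ p = a ^ (p - 1) * a := rpow_split ha (by linarith)
    have h2 : (1 + p * (b / a - 1)) * a ^ p = a ^ p + p * a ^ (p - 1) * (b - a) := by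
      rw [hap1]; field_simp
    rw [h2] at key
    exact key

theorem qi_nabla_hZ_thm36
    (h : ℝ) (hh : 0 < h) (N : ℕ) (hN : 1 ≤ N) (t : ℝ) (ht : 3 ≤ t)
    (u : ℕ → ℝ)
    (hnonneg : ∀ k, 0 ≤ u k)
    (hmono : ∀ k, u k ≤ u (k + 1))
    (hyp : ∀ k, 1 ≤ k → k ≤ N →
      (t - 2) * u k ^ (t - 2) * ((k : ℝ) * h) ^ (t - 3) ≤
        u (k - 1) ^ (t - 2) * (u k - u (k - 1)) / h) :
    h * ∑ k ∈ Finset.Icc 1 N, u k ^ t -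
        (h * ∑ k ∈ Finset.Icc 1 N, u k) ^ (t - 1) ≥
      u 0 ^ (t - 1) * (h * ∑ k ∈ Finset.Icc 1 N, u k) := by
  have mono : Monotone u := monotone_nat_of_le_succ hmono
  set S : ℕ → ℝ := fun n => h * ∑ k ∈ Finset.Icc 1 n, u k with hS
  have S0 : S 0 = 0 := by simp [hS]
  have Sstep : ∀ n, S (n + 1) = S n + h * u (n + 1) := by
    intro n
    simp only [hS]
    rw [Finset.sum_Icc_succ_top (by omega : 1 ≤ n + 1)]
    ring
  have Snonneg : ∀ n, 0 ≤ S n := by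
    intro n
    apply mul_nonneg hh.le
    exact Finset.sum_nonneg fun k _ => hnonneg k
  have Smono : ∀ n, S n ≤ S (n + 1) := by
    intro n
    rw [Sstep n]
    nlinarith [hnonneg (n + 1), hh]
  have Sle : ∀ n : ℕ, S n ≤ (n : ℝ) * h * u n := by
    intro n
    have hcard : (Finset.Icc 1 n).card = n := by
      rw [Nat.card_Icc]; omega
    have hsum : ∑ k ∈ Finset.Icc 1 n, u k ≤ (n : ℝ) * u n := by
      calc ∑ k ∈ Finset.Icc 1 n, u k
          ≤ (Finset.Icc 1 n).card • u n := by
            apply Finset.sum_le_card_nsmul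
            intro x hx
            exact mono (Finset.mem_Icc.mp hx).2
        _ = (n : ℝ) * u n := by rw [hcard]; simp
    calc S n = h * ∑ k ∈ Finset.Icc 1 n, u k := rfl
      _ ≤ h * ((n : ℝ) * u n) := by
          exact mul_le_mul_of_nonneg_left hsum hh.le
      _ = (n : ℝ) * h * u n := by ring
  -- Lemma A
  have lemA : ∀ n, n ≤ N → u 0 ^ (t - 1) + (t - 1) * S n ^ (t - 2) ≤ u n ^ (t - 1) := by
    intro n
    induction n with
    | zero =>
      intro _
      rw [S0, Real.zero_rpow (by linarith : t - 2 ≠ 0)]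
      simp
    | succ n ih =>
      intro hn1
      have IH := ih (by omega)
      have h1 := conv_lower (hnonneg n) (hmono n) (by linarith : (1:ℝ) ≤ t - 1)
      rw [(by ring : t - 1 - 1 = t - 2)] at h1
      have h2 := hyp (n + 1) (by omega) hn1
      simp only [Nat.add_sub_cancel] at h2
      push_cast at h2
      have h2' : h * ((t - 2) * u (n + 1) ^ (t - 2) * (((n : ℝ) + 1) * h) ^ (t - 3)) ≤
          u n ^ (t - 2) * (u (n + 1) - u n) := by
        have := (le_div_iff₀ hh).mp h2
        linarith
      have h3 : S (n + 1) ≤ ((n : ℝ) + 1) * h * u (n + 1) := by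
        have := Sle (n + 1); push_cast at this; linarith
      have hnh : (0 : ℝ) ≤ ((n : ℝ) + 1) * h := by positivity
      have h4 : S (n + 1) ^ (t - 3) ≤ (((n : ℝ) + 1) * h) ^ (t - 3) * u (n + 1) ^ (t - 3) := by
        calc S (n + 1) ^ (t - 3) ≤ ((((n : ℝ) + 1) * h) * u (n + 1)) ^ (t - 3) :=
              Real.rpow_le_rpow (Snonneg (n + 1)) h3 (by linarith)
          _ = (((n : ℝ) + 1) * h) ^ (t - 3) * u (n + 1) ^ (t - 3) :=
              Real.mul_rpow hnh (hnonneg (n + 1))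
      have h5 := conv_upper (Snonneg n) (Smono n) (by linarith : (1:ℝ) ≤ t - 2)
      rw [(by ring : t - 2 - 1 = t - 3)] at h5
      have hSd : S (n + 1) - S n = h * u (n + 1) := by rw [Sstep n]; ring
      rw [hSd] at h5
      have h6 : u (n + 1) ^ (t - 3) * u (n + 1) = u (n + 1) ^ (t - 2) := by
        have := rpow_split (hnonneg (n + 1)) (by linarith : (0:ℝ) < t - 2)
        rw [(by ring : t - 2 - 1 = t - 3)] at this
        linarith
      have h45 : (t - 2) * S (n + 1) ^ (t - 3) * (h * u (n + 1)) ≤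
          h * ((t - 2) * u (n + 1) ^ (t - 2) * (((n : ℝ) + 1) * h) ^ (t - 3)) := by
        have hmul : S (n + 1) ^ (t - 3) * (h * u (n + 1)) ≤
            ((((n : ℝ) + 1) * h) ^ (t - 3) * u (n + 1) ^ (t - 3)) * (h * u (n + 1)) := by
          apply mul_le_mul_of_nonneg_right h4
          exact mul_nonneg hh.le (hnonneg _)
        have heq : ((((n : ℝ) + 1) * h) ^ (t - 3) * u (n + 1) ^ (t - 3)) * (h * u (n + 1)) =
            h * (u (n + 1) ^ (t - 2) * (((n : ℝ) + 1) * h) ^ (t - 3)) := by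
          rw [← h6]; ring
        rw [heq] at hmul
        nlinarith [hmul]
      have h5' : S (n + 1) ^ (t - 2) ≤ S n ^ (t - 2) + u n ^ (t - 2) * (u (n + 1) - u n) := by
        linarith
      have hfin : (t - 1) * S (n + 1) ^ (t - 2) ≤
          (t - 1) * S n ^ (t - 2) + (t - 1) * (u n ^ (t - 2) * (u (n + 1) - u n)) := by
        nlinarith [mul_le_mul_of_nonneg_left h5' (by linarith : (0:ℝ) ≤ t - 1)]
      linarith
  -- Lemma B
  have lemB : ∀ n, n ≤ N →
      u 0 ^ (t - 1) * S n + S n ^ (t - 1) ≤ h * ∑ k ∈ Finset.Icc 1 n, u k ^ t := by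
    intro n
    induction n with
    | zero =>
      intro _
      rw [S0, Real.zero_rpow (by linarith : t - 1 ≠ 0)]
      simp
    | succ n ih =>
      intro hn1
      have IH := ih (by omega)
      have hA := lemA (n + 1) hn1
      have hU := conv_upper (Snonneg n) (Smono n) (by linarith : (1:ℝ) ≤ t - 1)
      rw [(by ring : t - 1 - 1 = t - 2)] at hU
      have hSd : S (n + 1) - S n = h * u (n + 1) := by rw [Sstep n]; ring
      rw [hSd] at hU
      have hut : u (n + 1) ^ (t - 1) * u (n + 1) = u (n + 1) ^ t := by
        have := rpow_split (hnonneg (n + 1)) (by linarith : (0:ℝ) < t)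
        linarith
      have hAmul : (u 0 ^ (t - 1) + (t - 1) * S (n + 1) ^ (t - 2)) * (h * u (n + 1)) ≤
          h * u (n + 1) ^ t := by
        have := mul_le_mul_of_nonneg_right hA
          (mul_nonneg hh.le (hnonneg (n + 1)) : (0:ℝ) ≤ h * u (n + 1))
        calc (u 0 ^ (t - 1) + (t - 1) * S (n + 1) ^ (t - 2)) * (h * u (n + 1)) ≤
            u (n + 1) ^ (t - 1) * (h * u (n + 1)) := this
          _ = h * u (n + 1) ^ t := by rw [← hut]; ring
      have hsum : h * ∑ k ∈ Finset.Icc 1 (n + 1), u k ^ t =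
          h * ∑ k ∈ Finset.Icc 1 n, u k ^ t + h * u (n + 1) ^ t := by
        rw [Finset.sum_Icc_succ_top (by omega : 1 ≤ n + 1)]; ring
      have hsub : u 0 ^ (t - 1) * S (n + 1) =
          u 0 ^ (t - 1) * S n + u 0 ^ (t - 1) * (h * u (n + 1)) := by
        rw [Sstep n]; ring
      rw [hsum]
      nlinarith [hU, hAmul, IH, hsub]
  have := lemB N le_rfl
  simp only [hS] at this ⊢
  linarith
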